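/- arXiv:1810.07789 — 6 statements merged into one kernel-verified Lean document; each statement's English description precedes it below -/
import Mathlib

section
/- Let H be a complex Hilbert space and let a be a rank-1 orthogonal projection on H. Then for any orthogonal projections p and q on H, ‖p·a·q‖ = ‖a·p‖ · ‖a·q‖. -/
open scoped InnerProductSpace

/-- Norm of a rank-one operator `x ↦ ⟪v, x⟫ • w`. -/
lemma rank_one_norm {H : Type*} [NormedAddCommGroup H] [InnerProductSpace ℂ H]
    (T : H →L[ℂ] H) (v w : H) (hT : ∀ x, T x = ⟪v, x⟫_ℂ • w) : ‖T‖ = ‖v‖ * ‖w‖ := by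
  have : T = (innerSL ℂ v).smulRight w := by
    ext x; simp [hT x]
  rw [this, ContinuousLinearMap.norm_smulRight_apply, innerSL_apply_norm]

/-- Let `H` be a complex Hilbert space and `a` a rank-1 orthogonal projection
on `H`. Then for any orthogonal projections `p` and `q` on `H`,
`‖p * a * q‖ = ‖a * p‖ * ‖a * q‖`. -/
theorem stmt1 {H : Type*} [NormedAddCommGroup H] [InnerProductSpace ℂ H] [CompleteSpace H]
    (a p q : H →L[ℂ] H)
    (ha : IsSelfAdjoint a ∧ a * a = a)
    (hrank : Module.finrank ℂ (LinearMap.range (a : H →ₗ[ℂ] H)) = 1)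
    (hp : IsSelfAdjoint p ∧ p * p = p)
    (hq : IsSelfAdjoint q ∧ q * q = q) :
    ‖p * a * q‖ = ‖a * p‖ * ‖a * q‖ := by
  -- get a nonzero vector v in the range of a
  have hnt : Nontrivial (LinearMap.range (a : H →ₗ[ℂ] H)) :=
    Module.nontrivial_of_finrank_pos (by rw [hrank]; norm_num)
  obtain ⟨v, hv0⟩ := exists_ne (0 : LinearMap.range (a : H →ₗ[ℂ] H))
  have hspan := (finrank_eq_one_iff_of_nonzero' v hv0).mp hrank
  have hvH : (v : H) ≠ 0 := fun h => hv0 (Subtype.ext h)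
  -- normalized vector u
  set u : H := (‖(v : H)‖ : ℂ)⁻¹ • (v : H) with hu
  have hnormu : ‖u‖ = 1 := by
    rw [hu, norm_smul]
    simp [norm_ne_zero_iff.mpr hvH, inv_mul_cancel₀ (norm_ne_zero_iff.mpr hvH)]
  have huu : ⟪u, u⟫_ℂ = 1 := by
    have := inner_self_eq_norm_sq_to_K (𝕜 := ℂ) u
    rw [hnormu] at this; simpa using this
  -- a fixes its range
  have hfix : ∀ x : H, x ∈ LinearMap.range (a : H →ₗ[ℂ] H) → a x = x := by
    rintro x ⟨y, rfl⟩
    have := congrArg (fun t => t y) ha.2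
    simpa using this
  have humem : u ∈ LinearMap.range (a : H →ₗ[ℂ] H) := by
    rw [hu]; exact Submodule.smul_mem _ _ v.2
  have hau : a u = u := hfix u humem
  have hsym := (ContinuousLinearMap.isSelfAdjoint_iff_isSymmetric.mp ha.1)
  -- key: a x = ⟪u, x⟫ • u
  have key : ∀ x : H, a x = ⟪u, x⟫_ℂ • u := by
    intro x
    obtain ⟨c, hc⟩ := hspan ⟨a x, LinearMap.mem_range.mpr ⟨x, rfl⟩⟩
    have hne : (‖(v : H)‖ : ℂ) ≠ 0 := by
      simpa using norm_ne_zero_iff.mpr hvH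
    have hc' : a x = (c * ‖(v : H)‖) • u := by
      have := congrArg (Subtype.val) hc
      simp only [Submodule.coe_smul] at this
      rw [← this, hu, smul_smul, mul_inv_cancel_right₀ hne]
    have hinner : ⟪u, a x⟫_ℂ = ⟪u, x⟫_ℂ := by
      rw [show (⟪u, a x⟫_ℂ) = ⟪a u, x⟫_ℂ from (hsym u x).symm, hau]
    rw [hc'] at hinner ⊢
    rw [inner_smul_right, huu, mul_one] at hinner
    rw [hinner]
  -- symmetric projections
  have hpsym := (ContinuousLinearMap.isSelfAdjoint_iff_isSymmetric.mp hp.1)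
  have hqsym := (ContinuousLinearMap.isSelfAdjoint_iff_isSymmetric.mp hq.1)
  have h1 : ‖p * a * q‖ = ‖q u‖ * ‖p u‖ := by
    apply rank_one_norm _ (q u) (p u)
    intro x
    show p (a (q x)) = _
    rw [key (q x), map_smul]
    exact congrArg (fun z => z • p u) (hqsym u x).symm
  have h2 : ‖a * p‖ = ‖p u‖ := by
    have := rank_one_norm (a * p) (p u) u (fun x => by
      show a (p x) = _
      rw [key (p x)]
      exact congrArg (fun z => z • u) (hpsym u x).symm)
    rw [this, hnormu, mul_one]
  have h3 : ‖a * q‖ = ‖q u‖ := by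
    have := rank_one_norm (a * q) (q u) u (fun x => by
      show a (q x) = _
      rw [key (q x)]
      exact congrArg (fun z => z • u) (hqsym u x).symm)
    rw [this, hnormu, mul_one]
  rw [h1, h2, h3, mul_comm]
end

section
/- Let X be a metric space that is locally finite (every ball is finite) but not uniformly locally finite. Then there exist a radius r > 0, a sequence of points (x_n) in X, and finite subsets X_n = B_r(x_n) with |X_n| ≥ n, such that after passing to a subsequence, d(X_m, X_n) ≥ m + n for all m ≠ n; in particular X contains a sparse subspace ⋃_n X_n. -/
/-- If a metric space `X` is locally finite (every closed ball is finite) but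
not uniformly locally finite, then there exist a radius `r > 0` and a sequence of points
`(x_n)` such that the balls `X_n = B_r(x_n)` satisfy `|X_n| ≥ n` and (after passing to a
subsequence) `d(X_m, X_n) ≥ m + n` for all `m ≠ n`; in particular `⋃ n, X_n` is a sparse
subspace of `X`. -/
theorem stmt2 {X : Type*} [MetricSpace X]
    (hloc : ∀ (x : X) (r : ℝ), (Metric.closedBall x r).Finite)
    (hnotunif : ¬ ∀ r : ℝ, 0 ≤ r → ∃ N : ℕ, ∀ x : X, (Metric.closedBall x r).ncard ≤ N) :
    ∃ r : ℝ, 0 < r ∧ ∃ x : ℕ → X,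
      (∀ n : ℕ, n ≤ (Metric.closedBall (x n) r).ncard) ∧
      (∀ m n : ℕ, m ≠ n →
        ∀ p ∈ Metric.closedBall (x m) r, ∀ q ∈ Metric.closedBall (x n) r,
          (m + n : ℝ) ≤ dist p q) := by
  classical
  push_neg at hnotunif
  obtain ⟨r0, hr0, hub⟩ := hnotunif
  set r : ℝ := r0 + 1 with hrdef
  have hrpos : 0 < r := by positivity
  have hub' : ∀ N : ℕ, ∃ x : X, N < (Metric.closedBall x r).ncard := by
    intro N
    obtain ⟨x, hx⟩ := hub N
    exact ⟨x, hx.trans_le (Set.ncard_le_ncard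
      (Metric.closedBall_subset_closedBall (by linarith)) (hloc x r))⟩
  have key : ∀ (s : Finset X) (n : ℕ), ∃ x : X,
      n ≤ (Metric.closedBall x r).ncard ∧ ∀ y ∈ s, 2 * n + 2 * r < dist y x := by
    intro s n
    have hT : (⋃ y ∈ s, Metric.closedBall y (2 * n + 2 * r)).Finite :=
      Set.Finite.biUnion s.finite_toSet (fun y _ => hloc y _)
    set M := hT.toFinset.sup (fun z => (Metric.closedBall z r).ncard) with hM
    obtain ⟨x, hx⟩ := hub' (max n M)
    refine ⟨x, le_of_lt (lt_of_le_of_lt (le_max_left _ _) hx), ?_⟩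
    intro y hy
    by_contra hle
    push_neg at hle
    have hxT : x ∈ ⋃ y ∈ s, Metric.closedBall y (2 * n + 2 * r) := by
      refine Set.mem_biUnion hy ?_
      rw [Metric.mem_closedBall, dist_comm]
      exact hle
    have hle2 : (Metric.closedBall x r).ncard ≤ M :=
      Finset.le_sup (f := fun z => (Metric.closedBall z r).ncard) (hT.mem_toFinset.mpr hxT)
    exact absurd (hle2.trans (le_max_right n M)) (not_le.mpr hx)
  choose pick hpick1 hpick2 using key
  let seq : ℕ → Finset X := fun n => Nat.rec ∅ (fun k sk => insert (pick sk k) sk) n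
  let x : ℕ → X := fun n => pick (seq n) n
  have hseq_succ : ∀ n, seq (n + 1) = insert (x n) (seq n) := fun n => rfl
  have hmono : ∀ m n, m ≤ n → seq m ⊆ seq n := by
    intro m n h
    induction n with
    | zero => simp_all
    | succ k ih =>
      rcases Nat.lt_or_ge m (k + 1) with h' | h'
      · have := ih (Nat.lt_succ_iff.mp h')
        rw [hseq_succ]
        exact this.trans (Finset.subset_insert _ _)
      · have : m = k + 1 := le_antisymm h h'
        subst this; exact Finset.Subset.refl _
  have hmem : ∀ m n, m < n → x m ∈ seq n := by
    intro m n h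
    have h1 : x m ∈ seq (m + 1) := by rw [hseq_succ]; exact Finset.mem_insert_self _ _
    exact hmono (m + 1) n h h1
  have main : ∀ m n, m < n → ∀ p ∈ Metric.closedBall (x m) r,
      ∀ q ∈ Metric.closedBall (x n) r, (m + n : ℝ) ≤ dist p q := by
    intro m n h p hp q hq
    have h1 : 2 * (n : ℝ) + 2 * r < dist (x m) (x n) := hpick2 (seq n) n (x m) (hmem m n h)
    have hdp : dist (x m) p ≤ r := by rw [dist_comm]; exact Metric.mem_closedBall.mp hp
    have hdq : dist q (x n) ≤ r := Metric.mem_closedBall.mp hq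
    have htri : dist (x m) (x n) ≤ dist (x m) p + dist p q + dist q (x n) :=
      dist_triangle4 (x m) p q (x n)
    have hmn : (m : ℝ) ≤ n := Nat.cast_le.mpr h.le
    linarith
  refine ⟨r, hrpos, x, fun n => hpick1 _ _, ?_⟩
  intro m n hmn p hp q hq
  rcases lt_or_gt_of_ne hmn with h | h
  · exact main m n h p hp q hq
  · have := main n m h q hq p hp
    rw [dist_comm] at this
    have : (n + m : ℝ) ≤ dist p q := this
    linarith
end

section
/- Let X be a countable set and let I ⊆ P(X) be an ideal containing all finite subsets of X. If I is nonmeager as a subset of P(X) ≅ 2^X with the product topology, then for every sequence (I_n) of pairwise disjoint finite subsets of X there exists an infinite set L ⊆ ℕ such that ⋃_{n∈L} I_n ∈ I. -/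
open Classical in
/-- **Jalali–Naini, Talagrand; one direction.** Let `X` be a countable set and
`I ⊆ P(X)` an ideal containing all finite subsets of `X`. If `I` is nonmeager as a subset of
`P(X) ≅ 2^X` with the product topology, then for every sequence `(I_n)` of pairwise disjoint
finite subsets of `X` there is an infinite `L ⊆ ℕ` with `⋃_{n ∈ L} I_n ∈ I`. -/
theorem stmt3 {X : Type*} [Countable X] (I : Set (Set X))
    (hdown : ∀ A ∈ I, ∀ B ⊆ A, B ∈ I)
    (hunion : ∀ A ∈ I, ∀ B ∈ I, A ∪ B ∈ I)
    (hfin : ∀ A : Set X, A.Finite → A ∈ I)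
    (hnonmeager : ¬ IsMeagre {f : X → Bool | {x : X | f x = true} ∈ I}) :
    ∀ In : ℕ → Set X, (∀ n, (In n).Finite) → Pairwise (Function.onFun Disjoint In) →
      ∃ L : Set ℕ, L.Infinite ∧ (⋃ n ∈ L, In n) ∈ I := by
  intro In hfinIn hdisj
  by_contra hcon
  push_neg at hcon
  apply hnonmeager
  set G : ℕ → Set (X → Bool) :=
    fun k => {f | ∀ n ≥ k, ∃ x ∈ In n, f x = false} with hG
  -- The ideal (as a set of functions) is contained in ⋃ k, G k
  have key : {f : X → Bool | {x : X | f x = true} ∈ I} ⊆ ⋃ k, G k := by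
    intro f hf
    have hLfin : {n | In n ⊆ {x | f x = true}}.Finite := by
      by_contra hinf
      refine hcon _ hinf (hdown _ hf _ ?_)
      intro x hx
      simp only [Set.mem_iUnion] at hx
      obtain ⟨n, hn, hx⟩ := hx
      exact hn hx
    obtain ⟨b, hb⟩ := hLfin.bddAbove
    refine Set.mem_iUnion.mpr ⟨b + 1, fun n hn => ?_⟩
    by_contra hno
    push_neg at hno
    have : In n ⊆ {x | f x = true} := by
      intro x hx
      have := hno x hx
      simpa [Bool.not_eq_false] using this
    have := hb this
    omega
  refine IsMeagre.mono key (isMeagre_iUnion fun k => ?_)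
  -- each G k is meagre; suffices nowhere dense
  have hnd : IsNowhereDense (G k) := by
    by_cases hne : ∀ n ≥ k, (In n).Nonempty
    · -- G k is closed
      have hclosed : IsClosed (G k) := by
        have : (G k)ᶜ = ⋃ n, ⋃ (_ : n ≥ k), {f : X → Bool | ∀ x ∈ In n, f x = true} := by
          ext f
          simp [hG, Bool.not_eq_false]
        rw [← isOpen_compl_iff, this]
        refine isOpen_iUnion fun n => isOpen_iUnion fun _ => ?_
        have : {f : X → Bool | ∀ x ∈ In n, f x = true}
            = ⋂ x ∈ In n, (fun f : X → Bool => f x) ⁻¹' {true} := by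
          ext f; simp
        rw [this]
        exact (hfinIn n).isOpen_biInter fun x _ =>
          (continuous_apply x).isOpen_preimage _ (isOpen_discrete _)
      rw [hclosed.isNowhereDense_iff]
      by_contra hint
      obtain ⟨f, hf⟩ := Set.nonempty_iff_ne_empty.mpr hint
      obtain ⟨F, u, hFu, hsub⟩ := isOpen_pi_iff.mp isOpen_interior f hf
      -- only finitely many m have In m meeting F
      have hMfin : {m | (In m ∩ (F : Set X)).Nonempty}.Finite := by
        have hsub' : {m | (In m ∩ (F : Set X)).Nonempty}
            ⊆ ⋃ x ∈ (F : Set X), {m | x ∈ In m} := by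
          rintro m ⟨x, hxI, hxF⟩
          exact Set.mem_biUnion hxF hxI
        refine Set.Finite.subset (Set.Finite.biUnion F.finite_toSet fun x _ => ?_) hsub'
        refine Set.Subsingleton.finite fun a ha b hb => ?_
        by_contra hab
        exact Set.disjoint_left.mp (hdisj hab) ha hb
      obtain ⟨b, hb⟩ := hMfin.bddAbove
      set n := max k (b + 1) with hn
      have hnk : n ≥ k := le_max_left _ _
      have hnM : (In n ∩ (F : Set X)) = ∅ := by
        by_contra hne'
        have : n ∈ {m | (In m ∩ (F : Set X)).Nonempty} :=
          Set.nonempty_iff_ne_empty.mpr hne'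
        have := hb this
        omega
      set g : X → Bool := fun x => if x ∈ In n then true else f x with hg
      have hgpi : g ∈ (F : Set X).pi u := by
        intro x hx
        have hxn : x ∉ In n := fun hxn =>
          Set.eq_empty_iff_forall_notMem.mp hnM x ⟨hxn, hx⟩
        simp only [hg, if_neg hxn]
        exact (hFu x hx).2
      have hgG : g ∈ G k := interior_subset (hsub hgpi)
      obtain ⟨x, hx, hfx⟩ := hgG n hnk
      rw [hg] at hfx
      simp only [if_pos hx] at hfx
      exact absurd hfx (by simp)
    · -- some In n with n ≥ k is empty, so G k = ∅
      push_neg at hne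
      obtain ⟨n, hn, hemp⟩ := hne
      have : G k = ∅ := Set.eq_empty_iff_forall_notMem.mpr fun f hf => by
        obtain ⟨x, hx, _⟩ := hf n hn
        rw [hemp] at hx
        exact hx
      rw [this]
      exact isNowhereDense_empty
  rw [isMeagre_iff_countable_union_isNowhereDense]
  exact ⟨{G k}, by simpa using hnd, Set.countable_singleton _, by simp⟩
end

section
/- Let g : ℕ → ℕ and let X(g) ⊆ ℕ² with the metric d defined by d((m₀,m₁),(n₀,n₁)) = m₀+n₀+1 if m₀ ≠ n₀, 1 if m₀ = n₀ and m₁ ≠ n₁, 0 otherwise. Let a be a bounded operator on ℓ²(X(g)) with propagation at most r for some r. Then a decomposes as a = a₁ + a₂ where a₁ is supported on pairs ((m₀,m₁),(n₀,n₁)) with m₀ = n₀ (block-diagonal over the columns), and a₂ has finite rank. -/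
/-- The metric `d` on `ℕ²`: `d(m̄, n̄) = m₀ + n₀ + 1` if `m₀ ≠ n₀`, `1` if `m₀ = n₀` and
`m₁ ≠ n₁`, and `0` if `m̄ = n̄`. -/
noncomputable def dNN (m n : ℕ × ℕ) : ℝ :=
  if m = n then 0 else if m.1 = n.1 then 1 else (m.1 : ℝ) + (n.1 : ℝ) + 1

/-- The Hilbert space `ℓ²(X(g))`, where `X(g) = {m̄ : m₁ ≤ g(m₀)}`. -/
noncomputable abbrev Hg (g : ℕ → ℕ) := lp (fun _ : {m : ℕ × ℕ // m.2 ≤ g m.1} => ℂ) 2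

/-- The canonical basis vector `δ_x` of `ℓ²(X(g))`. -/
noncomputable def deltaG (g : ℕ → ℕ) (x : {m : ℕ × ℕ // m.2 ≤ g m.1}) : Hg g :=
  lp.single 2 x 1

set_option maxHeartbeats 1000000

/-- Let `a` be a bounded operator on `ℓ²(X(g))` of propagation at most `r`.
Then `a = a₁ + a₂` where `a₁` is block-diagonal over the columns (supported on pairs with
equal first coordinates) and `a₂` has finite rank. -/
theorem stmt11 (g : ℕ → ℕ) (r : ℝ) (a : Hg g →L[ℂ] Hg g)
    (hprop : ∀ x y : {m : ℕ × ℕ // m.2 ≤ g m.1},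
      (inner ℂ (a (deltaG g x)) (deltaG g y) : ℂ) ≠ 0 → dNN x.1 y.1 ≤ r) :
    ∃ a₁ a₂ : Hg g →L[ℂ] Hg g, a = a₁ + a₂ ∧
      (∀ x y : {m : ℕ × ℕ // m.2 ≤ g m.1},
        (inner ℂ (a₁ (deltaG g x)) (deltaG g y) : ℂ) ≠ 0 → x.1.1 = y.1.1) ∧
      FiniteDimensional ℂ (LinearMap.range (a₂ : Hg g →ₗ[ℂ] Hg g)) := by
  classical
  set ι := {m : ℕ × ℕ // m.2 ≤ g m.1}
  -- the finite set of points in columns of index ≤ r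
  set S : Set ι := {x : ι | (x.1.1 : ℝ) ≤ r} with hS
  have hSfin : S.Finite := by
    set N := ⌊r⌋₊
    set M := (Finset.range (N + 1)).sup g
    have : S ⊆ (Subtype.val : ι → ℕ × ℕ) ⁻¹'
        ((Finset.range (N + 1) ×ˢ Finset.range (M + 1) : Finset (ℕ × ℕ)) : Set (ℕ × ℕ)) := by
      intro x hx
      have h1 : x.1.1 ≤ N := Nat.le_floor hx
      have h2 : x.1.2 ≤ M :=
        le_trans x.2 (Finset.le_sup (Finset.mem_range.mpr (Nat.lt_succ_of_le h1)))
      simp only [Set.mem_preimage, Finset.coe_product, Set.mem_prod, Finset.mem_coe,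
        Finset.mem_range]
      exact ⟨Nat.lt_succ_of_le h1, Nat.lt_succ_of_le h2⟩
    exact Set.Finite.subset (Set.Finite.preimage Subtype.val_injective.injOn
      (Finset.finite_toSet _)) this
  -- the finite-dimensional subspace spanned by the δ_x, x ∈ S
  set K : Submodule ℂ (Hg g) := Submodule.span ℂ (deltaG g '' S) with hK
  have hKfin : FiniteDimensional ℂ K := by
    exact FiniteDimensional.span_of_finite ℂ (hSfin.image _)
  have : CompleteSpace K := FiniteDimensional.complete ℂ K
  set P : Hg g →L[ℂ] Hg g := K.subtypeL.comp (K.orthogonalProjectionOnto) with hP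
  have hPmem : ∀ v : Hg g, P v ∈ K := fun v => (K.orthogonalProjectionOnto v).2
  have hPid : ∀ v ∈ K, P v = v := fun v hv => Submodule.starProjection_eq_self_iff.mpr hv
  have hsub : ∀ v : Hg g, v - P v ∈ Kᗮ := fun v => Submodule.sub_starProjection_mem_orthogonal v
  -- δ_x for x ∉ S is orthogonal to K
  have horth : ∀ x : ι, x ∉ S → deltaG g x ∈ Kᗮ := by
    intro x hx
    rw [Submodule.mem_orthogonal]
    intro u hu
    induction hu using Submodule.span_induction with
    | mem u hu =>
      obtain ⟨z, hz, rfl⟩ := hu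
      have hzx : z ≠ x := fun h => hx (h ▸ hz)
      simp only [deltaG, lp.inner_single_left, lp.single_apply]
      rw [Pi.single_eq_of_ne hzx]
      simp
    | zero => simp
    | add u v _ _ hu hv => rw [inner_add_left, hu, hv, add_zero]
    | smul c u _ hu => rw [inner_smul_left, hu, mul_zero]
  have hPzero : ∀ x : ι, x ∉ S → P (deltaG g x) = 0 := by
    intro x hx
    have := Submodule.orthogonalProjectionOnto_apply_of_mem_orthogonal (horth x hx)
    simp [hP, ContinuousLinearMap.comp_apply, this]
  -- the decomposition
  set a₂ : Hg g →L[ℂ] Hg g := a.comp P + P.comp (a.comp (ContinuousLinearMap.id ℂ (Hg g) - P))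
    with ha₂
  refine ⟨a - a₂, a₂, by abel, ?_, ?_⟩
  · intro x y hxy
    by_cases hx : x ∈ S
    · exfalso
      apply hxy
      have h1 : P (deltaG g x) = deltaG g x := hPid _ (Submodule.subset_span ⟨x, hx, rfl⟩)
      have : a₂ (deltaG g x) = a (deltaG g x) := by
        simp [ha₂, ContinuousLinearMap.comp_apply, h1, sub_self]
      simp [this]
    · -- x ∉ S
      have h0 : P (deltaG g x) = 0 := hPzero x hx
      have ha₂x : a₂ (deltaG g x) = P (a (deltaG g x)) := by
        simp [ha₂, ContinuousLinearMap.comp_apply, h0]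
      have hentry : ((a - a₂) (deltaG g x)) = a (deltaG g x) - P (a (deltaG g x)) := by
        simp [ha₂x]
      by_cases hy : y ∈ S
      · exfalso
        apply hxy
        rw [hentry]
        have hyK : deltaG g y ∈ K := Submodule.subset_span ⟨y, hy, rfl⟩
        exact Submodule.inner_left_of_mem_orthogonal hyK (hsub _)
      · -- both outside S
        have hinner : (inner ℂ ((a - a₂) (deltaG g x)) (deltaG g y) : ℂ)
            = inner ℂ (a (deltaG g x)) (deltaG g y) := by
          rw [hentry, inner_sub_left]
          rw [Submodule.inner_right_of_mem_orthogonal (hPmem _) (horth y hy), sub_zero]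
        rw [hinner] at hxy
        have hd := hprop x y hxy
        by_contra hne
        have hxr : r < (x.1.1 : ℝ) := not_le.mp hx
        have hxy' : x.1 ≠ y.1 := fun h => hne (congrArg Prod.fst h)
        rw [dNN, if_neg hxy', if_neg hne] at hd
        have h1 : (0:ℝ) ≤ (y.1.1 : ℝ) := Nat.cast_nonneg _
        linarith
  · -- a₂ has finite rank
    have hle : LinearMap.range (a₂ : Hg g →ₗ[ℂ] Hg g) ≤ K.map (a : Hg g →ₗ[ℂ] Hg g) ⊔ K := by
      rintro v ⟨u, rfl⟩
      have : a₂ u = a (P u) + P (a (u - P u)) := by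
        simp [ha₂, ContinuousLinearMap.comp_apply]
      rw [ContinuousLinearMap.coe_coe, this]
      exact Submodule.add_mem _
        (Submodule.mem_sup_left ⟨P u, hPmem u, rfl⟩)
        (Submodule.mem_sup_right (hPmem _))
    have : FiniteDimensional ℂ (K.map (a : Hg g →ₗ[ℂ] Hg g) ⊔ K : Submodule ℂ (Hg g)) := by
      have h1 : FiniteDimensional ℂ (K.map (a : Hg g →ₗ[ℂ] Hg g)) := Module.Finite.map K _
      infer_instance
    exact Submodule.finiteDimensional_of_le hle
end

section
/- Let X be a countable set and (p_n) a sequence of pairwise orthogonal finite-rank projections on ℓ²(X) with ‖p_n − q_n‖ < 2^{-n} for projections q_n. If ∑_n (p_n − q_n) converges in the strong operator topology, then it converges in norm to a compact operator. -/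
open Filter Bornology

/-- A continuous linear map with finite-dimensional range is a compact operator. -/
lemma aux_compact_of_fd {E F : Type*} [NormedAddCommGroup E] [NormedSpace ℂ E]
    [NormedAddCommGroup F] [NormedSpace ℂ F] (f : E →L[ℂ] F)
    (h : FiniteDimensional ℂ (LinearMap.range (f : E →ₗ[ℂ] F))) :
    IsCompactOperator f := by
  set V := LinearMap.range (f : E →ₗ[ℂ] F) with hV
  haveI : FiniteDimensional ℂ V := h
  haveI : ProperSpace V := FiniteDimensional.proper ℂ V
  set g : E →L[ℂ] V := f.codRestrict V (fun x => LinearMap.mem_range_self _ x) with hg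
  have hgc : IsCompactOperator g := by
    refine ⟨closure (g '' Metric.closedBall 0 1),
      (g.lipschitz.isBounded_image Metric.isBounded_closedBall).isCompact_closure, ?_⟩
    exact Filter.mem_of_superset (Metric.closedBall_mem_nhds 0 one_pos)
      (fun x hx => subset_closure ⟨x, hx, rfl⟩)
  have hcomp : (V.subtypeL ∘ g) = f := by ext x; rfl
  rw [← hcomp]; exact hgc.continuous_comp V.subtypeL.continuous

/-- If `p, q` are projections with `‖p - q‖ < 1` and `p` has finite-dimensional range,
so does `q`. -/
lemma aux_fd_of_near {E : Type*} [NormedAddCommGroup E] [NormedSpace ℂ E]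
    (p q : E →L[ℂ] E) (hq : q * q = q)
    (hfr : FiniteDimensional ℂ (LinearMap.range (p : E →ₗ[ℂ] E)))
    (hnear : ‖p - q‖ < 1) :
    FiniteDimensional ℂ (LinearMap.range (q : E →ₗ[ℂ] E)) := by
  set Vp := LinearMap.range (p : E →ₗ[ℂ] E)
  set Vq := LinearMap.range (q : E →ₗ[ℂ] E)
  set L : Vq →ₗ[ℂ] Vp :=
    ((p : E →ₗ[ℂ] E).comp Vq.subtype).codRestrict Vp
      (fun x => LinearMap.mem_range_self _ x.1) with hL
  have hinj : Function.Injective L := by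
    rw [← LinearMap.ker_eq_bot, LinearMap.ker_eq_bot']
    intro m hm
    have hpm : p m.1 = 0 := congrArg Subtype.val hm
    have hqm : q m.1 = m.1 := by
      obtain ⟨y, hy⟩ := m.2
      have := congrArg (fun f => f y) hq
      simp only [ContinuousLinearMap.mul_apply] at this
      rw [← hy]; exact this
    by_contra hne
    have hm0 : m.1 ≠ 0 := fun h0 => hne (Subtype.ext h0)
    have h1 : ‖(p - q) m.1‖ = ‖m.1‖ := by
      rw [ContinuousLinearMap.sub_apply, hpm, hqm, zero_sub, norm_neg]
    have h2 : ‖(p - q) m.1‖ ≤ ‖p - q‖ * ‖m.1‖ := (p - q).le_opNorm m.1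
    have h3 : ‖p - q‖ * ‖m.1‖ < 1 * ‖m.1‖ :=
      mul_lt_mul_of_pos_right hnear (norm_pos_iff.mpr hm0)
    rw [one_mul] at h3
    linarith [h1 ▸ h2]
  exact FiniteDimensional.of_injective L hinj

lemma aux_sum_compact {ι E F : Type*} [NormedAddCommGroup E] [NormedSpace ℂ E]
    [NormedAddCommGroup F] [NormedSpace ℂ F] (s : Finset ι) (f : ι → E →L[ℂ] F)
    (h : ∀ i ∈ s, IsCompactOperator (f i)) :
    IsCompactOperator (∑ i ∈ s, f i) := by
  rw [← ContinuousLinearMap.coe_sum']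
  refine Finset.sum_induction f (fun g => IsCompactOperator g) ?_ ?_ h
  · intro a b ha hb; simpa using ha.add hb
  · simpa using isCompactOperator_zero

/-- Let `X` be a countable set, `(p_n)` pairwise orthogonal finite-rank
projections on `ℓ²(X)`, and `(q_n)` projections with `‖p_n - q_n‖ < 2^{-n}`. If
`∑_n (p_n - q_n)` converges in the strong operator topology (to `T`), then it converges in
norm and the limit `T` is a compact operator. -/
theorem stmt15 {X : Type*} [Countable X]
    (p q : ℕ → (lp (fun _ : X => ℂ) 2 →L[ℂ] lp (fun _ : X => ℂ) 2))
    (hp : ∀ n, IsSelfAdjoint (p n) ∧ p n * p n = p n)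
    (hq : ∀ n, IsSelfAdjoint (q n) ∧ q n * q n = q n)
    (horth : ∀ m n, m ≠ n → p m * p n = 0)
    (hfr : ∀ n, FiniteDimensional ℂ
      (LinearMap.range ((p n) : lp (fun _ : X => ℂ) 2 →ₗ[ℂ] lp (fun _ : X => ℂ) 2)))
    (hnear : ∀ n, ‖p n - q n‖ < 2 ^ (-(n : ℤ)))
    (T : lp (fun _ : X => ℂ) 2 →L[ℂ] lp (fun _ : X => ℂ) 2)
    (hT : ∀ v, Filter.Tendsto (fun N => (∑ n ∈ Finset.range N, (p n - q n)) v)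
      Filter.atTop (nhds (T v))) :
    Filter.Tendsto (fun N => ∑ n ∈ Finset.range N, (p n - q n)) Filter.atTop (nhds T) ∧
      IsCompactOperator T := by
  -- the series is absolutely summable in operator norm
  have hbound : ∀ n, ‖p n - q n‖ ≤ (2⁻¹ : ℝ) ^ n := by
    intro n
    have := (hnear n).le
    rwa [zpow_neg, zpow_natCast, ← inv_pow] at this
  have hsum : Summable (fun n => p n - q n) :=
    Summable.of_norm_bounded (summable_geometric_of_lt_one (by norm_num) (by norm_num)) hbound
  obtain ⟨S, hS⟩ := hsum
  have htend : Tendsto (fun N => ∑ n ∈ Finset.range N, (p n - q n)) atTop (nhds S) :=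
    hS.tendsto_sum_nat
  -- S = T by pointwise convergence
  have hST : S = T := by
    refine ContinuousLinearMap.ext fun v => ?_
    have h1 : Tendsto (fun N => (∑ n ∈ Finset.range N, (p n - q n)) v) atTop (nhds (S v)) :=
      ((ContinuousLinearMap.apply ℂ (lp (fun _ : X => ℂ) 2) v).continuous.tendsto S).comp htend
    exact tendsto_nhds_unique h1 (hT v)
  subst hST
  refine ⟨htend, ?_⟩
  have hcpt : ∀ N, IsCompactOperator (∑ n ∈ Finset.range N, (p n - q n)) := by
    intro N
    refine aux_sum_compact _ _ (fun n _ => ?_)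
    have hpc : IsCompactOperator (p n) := aux_compact_of_fd _ (hfr n)
    have hqfd : FiniteDimensional ℂ
        (LinearMap.range ((q n) : lp (fun _ : X => ℂ) 2 →ₗ[ℂ]
          lp (fun _ : X => ℂ) 2)) := by
      refine aux_fd_of_near (p n) (q n) (hq n).2 (hfr n) (lt_of_lt_of_le (hnear n) ?_)
      calc (2:ℝ) ^ (-(n:ℤ)) ≤ 2 ^ (0:ℤ) := by
            apply zpow_le_zpow_right₀ (by norm_num); omega
        _ = 1 := by norm_num
    have hqc : IsCompactOperator (q n) := aux_compact_of_fd _ hqfd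
    simpa using hpc.sub hqc
  refine isCompactOperator_of_tendsto htend (Filter.Eventually.of_forall fun N => ?_)
  rw [ContinuousLinearMap.coe_sum']
  exact hcpt N
end

section
/- Let X and Y be sets, with subsets X'' ⊆ X and Y'' ⊆ Y cofinite, and let f : X'' → Y and g : Y'' → X be injections such that f⁻¹(Y \ Y'') and g⁻¹(X \ X'') are finite. Then there exist cofinite subsets X̃ ⊆ X and Ỹ ⊆ Y and a bijection h : X̃ → Ỹ such that for each x ∈ X̃, either x ∈ X'' and h(x) = f(x), or x ∈ range(g) and h(x) = g⁻¹(x). -/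
/-- **König's proof of Cantor–Schröder–Bernstein, cofinite form.** Let
`X'' ⊆ X` and `Y'' ⊆ Y` be cofinite, `f` injective on `X''`, `g` injective on `Y''`, with
`{x ∈ X'' : f x ∉ Y''}` and `{y ∈ Y'' : g y ∉ X''}` finite. Then there are cofinite subsets
`X̃ ⊆ X`, `Ỹ ⊆ Y` and a bijection `h : X̃ → Ỹ` such that for each `x ∈ X̃` either
`x ∈ X''` and `h x = f x`, or `x ∈ range g` and `h x = g⁻¹ x`. -/
theorem stmt18 {X Y : Type*} (X'' : Set X) (Y'' : Set Y)
    (hX : X''ᶜ.Finite) (hY : Y''ᶜ.Finite)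
    (f : X → Y) (g : Y → X)
    (hf : Set.InjOn f X'') (hg : Set.InjOn g Y'')
    (hfY : {x : X | x ∈ X'' ∧ f x ∉ Y''}.Finite)
    (hgX : {y : Y | y ∈ Y'' ∧ g y ∉ X''}.Finite) :
    ∃ (Xt : Set X) (Yt : Set Y) (h : X → Y),
      Xtᶜ.Finite ∧ Ytᶜ.Finite ∧ Set.BijOn h Xt Yt ∧
      ∀ x ∈ Xt, (x ∈ X'' ∧ h x = f x) ∨ (∃ y ∈ Y'', g y = x ∧ h x = y) := by
  classical
  rcases isEmpty_or_nonempty Y with hE | hNE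
  · haveI : IsEmpty X := ⟨fun x => hE.elim (f x)⟩
    refine ⟨∅, ∅, f, ?_, ?_, ?_, ?_⟩
    · exact Set.toFinite _
    · exact Set.toFinite _
    · simp [Set.bijOn_empty]
    · simp
  -- Knaster–Tarski fixed point, as in the classical proof of CSB
  set F : Set X →o Set X :=
    ⟨fun s => X'' \ g '' (Y'' \ f '' s), by
      intro s t hst
      exact Set.diff_subset_diff_right
        (Set.image_mono (Set.diff_subset_diff_right (Set.image_mono hst)))⟩
    with hF
  set S := OrderHom.lfp F with hSdef
  have hSfix : X'' \ g '' (Y'' \ f '' S) = S := F.map_lfp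
  set G : Set X := g '' (Y'' \ f '' S) with hG
  have hSsub : S ⊆ X'' := by rw [← hSfix]; exact Set.diff_subset
  have hSG : ∀ x ∈ S, x ∉ G := by
    intro x hx
    rw [← hSfix] at hx
    exact hx.2
  -- inverse of g on Y''
  have hinv : ∀ y ∈ Y'', Function.invFunOn g Y'' (g y) = y := fun y hy =>
    hg.leftInvOn_invFunOn hy
  set h : X → Y := fun x => if x ∈ S then f x else Function.invFunOn g Y'' x with hh
  have hval_in : ∀ x ∈ S, h x = f x := fun x hx => by simp [hh, hx]
  have hval_out : ∀ y ∈ Y'' \ f '' S, h (g y) = y := by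
    intro y hy
    have : g y ∉ S := fun hmem => hSG _ hmem ⟨y, hy, rfl⟩
    simp only [hh, this, if_false]
    exact hinv y hy.1
  refine ⟨S ∪ G, f '' S ∪ (Y'' \ f '' S), h, ?_, ?_, ?_, ?_⟩
  · refine hX.subset fun x hx => ?_
    intro hxX
    have : x ∈ S ∨ x ∈ G := by
      by_cases hxG : x ∈ G
      · exact Or.inr hxG
      · exact Or.inl (hSfix ▸ ⟨hxX, hxG⟩)
    exact hx (this.elim Or.inl Or.inr)
  · refine hY.subset fun y hy => ?_
    intro hyY
    by_cases hyf : y ∈ f '' S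
    · exact hy (Or.inl hyf)
    · exact hy (Or.inr ⟨hyY, hyf⟩)
  · constructor
    · -- MapsTo
      rintro x (hx | hx)
      · exact Or.inl ⟨x, hx, (hval_in x hx).symm⟩
      · obtain ⟨y, hy, rfl⟩ := hx
        rw [hval_out y hy]
        exact Or.inr hy
    constructor
    · -- InjOn
      rintro x₁ (hx₁ | hx₁) x₂ (hx₂ | hx₂) heq
      · rw [hval_in x₁ hx₁, hval_in x₂ hx₂] at heq
        exact hf (hSsub hx₁) (hSsub hx₂) heq
      · obtain ⟨y, hy, rfl⟩ := hx₂
        rw [hval_in x₁ hx₁, hval_out y hy] at heq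
        exact absurd ⟨x₁, hx₁, heq⟩ hy.2
      · obtain ⟨y, hy, rfl⟩ := hx₁
        rw [hval_in x₂ hx₂, hval_out y hy] at heq
        exact absurd ⟨x₂, hx₂, heq.symm⟩ hy.2
      · obtain ⟨y₁, hy₁, rfl⟩ := hx₁
        obtain ⟨y₂, hy₂, rfl⟩ := hx₂
        rw [hval_out y₁ hy₁, hval_out y₂ hy₂] at heq
        rw [heq]
    · -- SurjOn
      rintro y (hy | hy)
      · obtain ⟨x, hx, rfl⟩ := hy
        exact ⟨x, Or.inl hx, hval_in x hx⟩
      · exact ⟨g y, Or.inr ⟨y, hy, rfl⟩, hval_out y hy⟩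
  · rintro x (hx | hx)
    · exact Or.inl ⟨hSsub hx, hval_in x hx⟩
    · obtain ⟨y, hy, rfl⟩ := hx
      exact Or.inr ⟨y, hy.1, rfl, hval_out y hy⟩
end
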